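/- Let D be the explicit digraph described in the context. Then for each i∈{1,2,3}, the set {z_i, y_{i+1}, y_{i+2}} (subscripts taken modulo 3, with representatives in {1,2,3}) is an (s_1,t_1)-separator in D−{s_2,t_2}. -/

import Mathlib

/-- A digraph (given by its arc relation `A`) is loopless. -/
def IsLoopless {V : Type*} (A : V → V → Prop) : Prop :=
  ∀ v, ¬ A v v

/-- `l` is a directed path in the digraph with arc relation `A`, recorded as the
(nonempty, repetition-free) list of its vertices, consecutive ones joined by arcs. -/
def IsDipath {V : Type*} (A : V → V → Prop) (l : List V) : Prop :=
  l ≠ [] ∧ l.Nodup ∧ l.Chain' A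

/-- `l` is a directed `(s,t)`-path. -/
def IsDipathFrom {V : Type*} (A : V → V → Prop) (s t : V) (l : List V) : Prop :=
  IsDipath A l ∧ l.head? = some s ∧ l.getLast? = some t

/-- The digraph `A`, with the vertices of `F` deleted, contains `k` internally
disjoint `(s,t)`-paths. -/
def HasIDPaths {V : Type*} (A : V → V → Prop) (F : Set V) (s t : V) (k : ℕ) : Prop :=
  ∃ P : Fin k → List V,
    (∀ i, IsDipathFrom A s t (P i) ∧ ∀ v ∈ P i, v ∉ F) ∧
    (∀ i j, i ≠ j → ∀ v, v ∈ P i → v ∈ P j → v = s ∨ v = t)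

/-- The digraph `A` is `k`-linked. -/
def IsKLinked {V : Type*} (A : V → V → Prop) (k : ℕ) : Prop :=
  ∀ s t : Fin k → V,
    Function.Injective (Sum.elim s t : Fin k ⊕ Fin k → V) →
    ∃ P : Fin k → List V,
      (∀ i, IsDipathFrom A (s i) (t i) (P i)) ∧
      (∀ i j, i ≠ j → ∀ v, v ∈ P i → v ∉ P j)

/-- The digraph `A` is `k`-strong. -/
def IsKStrong {V : Type*} [Fintype V] (A : V → V → Prop) (k : ℕ) : Prop :=
  k + 1 ≤ Fintype.card V ∧
  ∀ F : Finset V, F.card ≤ k - 1 →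
    ∀ x y : V, x ∉ F → y ∉ F → x ≠ y →
      ∃ l : List V, IsDipathFrom A x y l ∧ ∀ v ∈ l, v ∉ F

/-- `(A, V1, V2)` is a split digraph: the vertex set is the disjoint union of the
nonempty sets `V1` and `V2`, there is no arc between two vertices of `V1`, and the
subdigraph induced by `V2` is semicomplete. -/
def IsSplitDigraph {V : Type*} (A : V → V → Prop) (V1 V2 : Set V) : Prop :=
  V1.Nonempty ∧ V2.Nonempty ∧ Disjoint V1 V2 ∧ V1 ∪ V2 = Set.univ ∧
  (∀ u ∈ V1, ∀ v ∈ V1, ¬ A u v) ∧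
  (∀ u ∈ V2, ∀ v ∈ V2, u ≠ v → A u v ∨ A v u)

/-- The tuple `(A, s1, t1, s2, t2)` is good: there are vertex-disjoint `(s1,t1)`-
and `(s2,t2)`-paths. -/
def IsGood {V : Type*} (A : V → V → Prop) (s1 t1 s2 t2 : V) : Prop :=
  ∃ P1 P2 : List V, IsDipathFrom A s1 t1 P1 ∧ IsDipathFrom A s2 t2 P2 ∧
    ∀ v ∈ P1, v ∉ P2

/-- In the explicit 13-vertex split digraph of Proposition 2 (vertices
s1,t1,s2,t2 together with x 0,x 1,x 2, y 0,y 1,y 2, z 0,z 1,z 2, arcs exactly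
as listed), for each i the set {z i, y (i+1), y (i+2)} (indices mod 3) is an
(s1,t1)-separator in D − {s2,t2}. -/

lemma fin3_cases (i j : Fin 3) : j = i ∨ j = i + 1 ∨ j = i + 2 := by
  fin_cases i <;> fin_cases j <;> decide

lemma closure_aux {V : Type*} (A : V → V → Prop) (s1 t1 s2 t2 : V) (x y z : Fin 3 → V)
    (harc : ∀ u v : V, A u v ↔ (
      (∃ i : Fin 3, u = y i ∧ v = y (i + 1)) ∨
      (u = s1 ∧ v = s2) ∨ (u = t1 ∧ v = s2) ∨ (u = s1 ∧ v = t2) ∨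
      (u = t1 ∧ v = t2) ∨ (u = t1 ∧ v = s1) ∨ (u = t2 ∧ v = s2) ∨
      (u = s1 ∧ ∃ i : Fin 3, v = x i) ∨ ((∃ i : Fin 3, u = z i) ∧ v = t1) ∨
      (u = t1 ∧ ∃ i : Fin 3, v = y i) ∨ ((∃ i : Fin 3, u = y i) ∧ v = s1) ∨
      (∃ i : Fin 3, u = x i ∧ v = y i) ∨ (∃ i : Fin 3, u = y i ∧ v = z i) ∨
      (((∃ i : Fin 3, u = x i) ∨ (∃ i : Fin 3, u = y i)) ∧ v = s2) ∨
      (u = s2 ∧ ∃ i : Fin 3, v = z i) ∨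
      (u = t2 ∧ ((∃ i : Fin 3, v = y i) ∨ (∃ i : Fin 3, v = z i))) ∨
      ((∃ i : Fin 3, u = x i) ∧ v = t2) ∨
      (∃ i : Fin 3, u = z i ∧ v = y (i + 1)) ∨
      (∃ i : Fin 3, u = y (i + 1) ∧ v = x (i + 2))))
    (hys1 : ∀ j, y j ≠ s1) (hyx : ∀ j k, y j ≠ x k)
    (hyinj : ∀ j k : Fin 3, y j = y k → j = k)
    (hzs1 : ∀ j, z j ≠ s1) (hzx : ∀ j k, z j ≠ x k) (hzy : ∀ j k, z j ≠ y k)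
    (ht1s1 : t1 ≠ s1) (ht1x : ∀ k, t1 ≠ x k) (ht1y : ∀ k, t1 ≠ y k)
    (hs2s1 : s2 ≠ s1) (hs2x : ∀ k, s2 ≠ x k) (hs2y : ∀ k, s2 ≠ y k)
    (ht2s1 : t2 ≠ s1) (ht2x : ∀ k, t2 ≠ x k) (ht2y : ∀ k, t2 ≠ y k)
    (i : Fin 3) :
    ∀ u v, (u = s1 ∨ (∃ j, u = x j) ∨ u = y i) → A u v →
      ¬(v = s2 ∨ v = t2 ∨ v = z i ∨ v = y (i+1) ∨ v = y (i+2)) →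
      (v = s1 ∨ (∃ j, v = x j) ∨ v = y i) := by
  intro u v hu hA hv
  push_neg at hv
  obtain ⟨hv1, hv2, hv3, hv4, hv5⟩ := hv
  have hRnot : ∀ w, (w = s1 ∨ (∃ j, w = x j) ∨ w = y i) →
      (∀ j, w ≠ y j) → (w ≠ s1) → (∀ j, w ≠ x j) → False := by
    rintro w (rfl | ⟨j, rfl⟩ | rfl) hny hns hnx
    · exact hns rfl
    · exact hnx j rfl
    · exact hny i rfl
  rw [harc] at hA
  rcases hA with ⟨j,rfl,rfl⟩|⟨rfl,rfl⟩|⟨rfl,rfl⟩|⟨rfl,rfl⟩|⟨rfl,rfl⟩|⟨rfl,rfl⟩|⟨rfl,rfl⟩|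
      ⟨rfl,j,rfl⟩|⟨⟨j,rfl⟩,rfl⟩|⟨rfl,hy⟩|⟨⟨j,rfl⟩,rfl⟩|⟨j,rfl,rfl⟩|⟨j,rfl,rfl⟩|
      ⟨hxy,rfl⟩|⟨rfl,hz⟩|⟨rfl,hyz⟩|⟨hx,rfl⟩|⟨j,rfl,rfl⟩|⟨j,rfl,rfl⟩
  -- 1: y j → y (j+1)
  · rcases hu with h | ⟨k, h⟩ | h
    · exact absurd h (hys1 j)
    · exact absurd h (hyx j k)
    · have := hyinj j i h
      subst this
      exact absurd rfl hv4
  · exact absurd rfl hv1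
  · exact absurd rfl hv1
  · exact absurd rfl hv2
  · exact absurd rfl hv2
  · exact Or.inl rfl
  · exact absurd rfl hv1
  -- s1 → x j
  · exact Or.inr (Or.inl ⟨j, rfl⟩)
  -- z j → t1
  · exact (hRnot (z j) hu (hzy j) (hzs1 j) (hzx j)).elim
  -- t1 → y
  · exact (hRnot u hu ht1y ht1s1 ht1x).elim
  -- y j → s1
  · exact Or.inl rfl
  -- x j → y j
  · rcases fin3_cases i j with rfl | rfl | rfl
    · exact Or.inr (Or.inr rfl)
    · exact absurd rfl hv4
    · exact absurd rfl hv5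
  -- y j → z j
  · rcases hu with h | ⟨k, h⟩ | h
    · exact absurd h (hys1 j)
    · exact absurd h (hyx j k)
    · have := hyinj j i h
      subst this
      exact absurd rfl hv3
  · exact absurd rfl hv1
  -- s2 → z
  · exact (hRnot u hu hs2y hs2s1 hs2x).elim
  -- t2 → ...
  · exact (hRnot u hu ht2y ht2s1 ht2x).elim
  · exact absurd rfl hv2
  -- z j → y (j+1)
  · exact (hRnot (z j) hu (hzy j) (hzs1 j) (hzx j)).elim
  -- y (j+1) → x (j+2)
  · exact Or.inr (Or.inl ⟨j + 2, rfl⟩)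

lemma chain_reach {V : Type*} (A : V → V → Prop) (R S : V → Prop)
    (hcl : ∀ u v, R u → A u v → ¬ S v → R v) :
    ∀ l : List V, l.Chain' A → (∀ v ∈ l, ¬ S v) →
      ∀ a, l.head? = some a → R a → ∀ v ∈ l, R v := by
  intro l
  induction l with
  | nil => simp
  | cons b tl ih =>
    intro hch hav a hh ha v hv
    rw [List.head?_cons, Option.some_inj] at hh
    subst hh
    rcases List.mem_cons.mp hv with rfl | hv
    · exact ha
    · cases tl with
      | nil => simp at hv
      | cons c tl2 =>
        have hbc : A b c := (List.isChain_cons_cons.mp hch).1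
        have hc : R c := hcl b c ha hbc (hav c (by simp))
        exact ih (List.isChain_cons_cons.mp hch).2
          (fun w hw => hav w (List.mem_cons_of_mem _ hw)) c rfl hc v hv

theorem stmt_7 {V : Type*} [Fintype V] [DecidableEq V]
    (A : V → V → Prop) (s1 t1 s2 t2 : V) (x y z : Fin 3 → V)
    (hnodup : ([s1, t1, s2, t2, x 0, x 1, x 2, y 0, y 1, y 2,
                z 0, z 1, z 2] : List V).Nodup)
    (hvert : ∀ v : V, v ∈ ([s1, t1, s2, t2, x 0, x 1, x 2, y 0, y 1, y 2,
                z 0, z 1, z 2] : List V))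
    (harc : ∀ u v : V, A u v ↔ (
      (∃ i : Fin 3, u = y i ∧ v = y (i + 1)) ∨
      (u = s1 ∧ v = s2) ∨ (u = t1 ∧ v = s2) ∨ (u = s1 ∧ v = t2) ∨
      (u = t1 ∧ v = t2) ∨ (u = t1 ∧ v = s1) ∨ (u = t2 ∧ v = s2) ∨
      (u = s1 ∧ ∃ i : Fin 3, v = x i) ∨ ((∃ i : Fin 3, u = z i) ∧ v = t1) ∨
      (u = t1 ∧ ∃ i : Fin 3, v = y i) ∨ ((∃ i : Fin 3, u = y i) ∧ v = s1) ∨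
      (∃ i : Fin 3, u = x i ∧ v = y i) ∨ (∃ i : Fin 3, u = y i ∧ v = z i) ∨
      (((∃ i : Fin 3, u = x i) ∨ (∃ i : Fin 3, u = y i)) ∧ v = s2) ∨
      (u = s2 ∧ ∃ i : Fin 3, v = z i) ∨
      (u = t2 ∧ ((∃ i : Fin 3, v = y i) ∨ (∃ i : Fin 3, v = z i))) ∨
      ((∃ i : Fin 3, u = x i) ∧ v = t2) ∨
      (∃ i : Fin 3, u = z i ∧ v = y (i + 1)) ∨
      (∃ i : Fin 3, u = y (i + 1) ∧ v = x (i + 2)))) :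
    ∀ i : Fin 3,
      s1 ∉ ({z i, y (i + 1), y (i + 2)} : Set V) ∧
      t1 ∉ ({z i, y (i + 1), y (i + 2)} : Set V) ∧
      ¬ ∃ l : List V, IsDipathFrom A s1 t1 l ∧
          ∀ v ∈ l, v ∉ ({s2, t2, z i, y (i + 1), y (i + 2)} : Set V) := by
  intro i
  simp only [List.nodup_cons, List.mem_cons, List.not_mem_nil, or_false, not_or,
    List.nodup_nil, and_true] at hnodup
  obtain ⟨⟨h_s1_t1, h_s1_s2, h_s1_t2, h_s1_x0, h_s1_x1, h_s1_x2, h_s1_y0, h_s1_y1, h_s1_y2, h_s1_z0, h_s1_z1, h_s1_z2⟩, ⟨h_t1_s2, h_t1_t2, h_t1_x0, h_t1_x1, h_t1_x2, h_t1_y0, h_t1_y1, h_t1_y2, h_t1_z0, h_t1_z1, h_t1_z2⟩, ⟨h_s2_t2, h_s2_x0, h_s2_x1, h_s2_x2, h_s2_y0, h_s2_y1, h_s2_y2, h_s2_z0, h_s2_z1, h_s2_z2⟩, ⟨h_t2_x0, h_t2_x1, h_t2_x2, h_t2_y0, h_t2_y1, h_t2_y2, h_t2_z0, h_t2_z1,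 h_t2_z2⟩, ⟨h_x0_x1, h_x0_x2, h_x0_y0, h_x0_y1, h_x0_y2, h_x0_z0, h_x0_z1, h_x0_z2⟩, ⟨h_x1_x2, h_x1_y0, h_x1_y1, h_x1_y2, h_x1_z0, h_x1_z1, h_x1_z2⟩, ⟨h_x2_y0, h_x2_y1, h_x2_y2, h_x2_z0, h_x2_z1, h_x2_z2⟩, ⟨h_y0_y1, h_y0_y2, h_y0_z0, h_y0_z1, h_y0_z2⟩, ⟨h_y1_y2, h_y1_z0, h_y1_z1, h_y1_z2⟩, ⟨h_y2_z0, h_y2_z1, h_y2_z2⟩, ⟨h_z0_z1, h_z0_z2⟩, h_z1_z2, -⟩ := hnodup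
  have hs1y : ∀ j : Fin 3, s1 ≠ y j := by
    intro j; fin_cases j
    exacts [h_s1_y0, h_s1_y1, h_s1_y2]
  have hs1z : ∀ j : Fin 3, s1 ≠ z j := by
    intro j; fin_cases j
    exacts [h_s1_z0, h_s1_z1, h_s1_z2]
  have ht1yf : ∀ j : Fin 3, t1 ≠ y j := by
    intro j; fin_cases j
    exacts [h_t1_y0, h_t1_y1, h_t1_y2]
  have ht1z : ∀ j : Fin 3, t1 ≠ z j := by
    intro j; fin_cases j
    exacts [h_t1_z0, h_t1_z1, h_t1_z2]
  have ht1xf : ∀ j : Fin 3, t1 ≠ x j := by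
    intro j; fin_cases j
    exacts [h_t1_x0, h_t1_x1, h_t1_x2]
  have hys1 : ∀ j : Fin 3, y j ≠ s1 := fun j => (hs1y j).symm
  have hyx : ∀ j k : Fin 3, y j ≠ x k := by
    intro j k; fin_cases j <;> fin_cases k
    exacts [Ne.symm h_x0_y0, Ne.symm h_x1_y0, Ne.symm h_x2_y0,
            Ne.symm h_x0_y1, Ne.symm h_x1_y1, Ne.symm h_x2_y1,
            Ne.symm h_x0_y2, Ne.symm h_x1_y2, Ne.symm h_x2_y2]
  have hyinj : ∀ j k : Fin 3, y j = y k → j = k := by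
    intro j k h; by_contra hne
    fin_cases j <;> fin_cases k <;>
      first
        | exact hne rfl
        | exact absurd h (by assumption)
        | exact absurd h.symm (by assumption)
  have hzs1 : ∀ j : Fin 3, z j ≠ s1 := fun j => (hs1z j).symm
  have hzx : ∀ j k : Fin 3, z j ≠ x k := by
    intro j k; fin_cases j <;> fin_cases k
    exacts [Ne.symm h_x0_z0, Ne.symm h_x1_z0, Ne.symm h_x2_z0,
            Ne.symm h_x0_z1, Ne.symm h_x1_z1, Ne.symm h_x2_z1,
            Ne.symm h_x0_z2, Ne.symm h_x1_z2, Ne.symm h_x2_z2]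
  have hzy : ∀ j k : Fin 3, z j ≠ y k := by
    intro j k; fin_cases j <;> fin_cases k
    exacts [Ne.symm h_y0_z0, Ne.symm h_y1_z0, Ne.symm h_y2_z0,
            Ne.symm h_y0_z1, Ne.symm h_y1_z1, Ne.symm h_y2_z1,
            Ne.symm h_y0_z2, Ne.symm h_y1_z2, Ne.symm h_y2_z2]
  have hs2y : ∀ k : Fin 3, s2 ≠ y k := by
    intro k; fin_cases k
    exacts [h_s2_y0, h_s2_y1, h_s2_y2]
  have hs2x : ∀ k : Fin 3, s2 ≠ x k := by
    intro k; fin_cases k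
    exacts [h_s2_x0, h_s2_x1, h_s2_x2]
  have ht2y : ∀ k : Fin 3, t2 ≠ y k := by
    intro k; fin_cases k
    exacts [h_t2_y0, h_t2_y1, h_t2_y2]
  have ht2x : ∀ k : Fin 3, t2 ≠ x k := by
    intro k; fin_cases k
    exacts [h_t2_x0, h_t2_x1, h_t2_x2]
  refine ⟨?_, ?_, ?_⟩
  · simp only [Set.mem_insert_iff, Set.mem_singleton_iff]
    push_neg
    exact ⟨hs1z i, hs1y (i+1), hs1y (i+2)⟩
  · simp only [Set.mem_insert_iff, Set.mem_singleton_iff]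
    push_neg
    exact ⟨ht1z i, ht1yf (i+1), ht1yf (i+2)⟩
  · rintro ⟨l, ⟨⟨hlne, hlnd, hch⟩, hhead, hlast⟩, havoid⟩
    have hcl := closure_aux A s1 t1 s2 t2 x y z harc hys1 hyx hyinj hzs1 hzx hzy
      (Ne.symm h_s1_t1) ht1xf ht1yf (Ne.symm h_s1_s2) hs2x hs2y (Ne.symm h_s1_t2) ht2x ht2y i
    have hS : ∀ v ∈ l, ¬(v = s2 ∨ v = t2 ∨ v = z i ∨ v = y (i+1) ∨ v = y (i+2)) := by
      intro v hv
      have := havoid v hv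
      simpa only [Set.mem_insert_iff, Set.mem_singleton_iff] using this
    have hall := chain_reach A
      (fun w => w = s1 ∨ (∃ j, w = x j) ∨ w = y i)
      (fun v => v = s2 ∨ v = t2 ∨ v = z i ∨ v = y (i+1) ∨ v = y (i+2))
      hcl l hch hS s1 hhead (Or.inl rfl)
    have ht1mem : t1 ∈ l := by
      have h2 := List.getLast?_eq_getLast hlne ▸ hlast
      rw [Option.some_inj] at h2
      exact h2 ▸ List.getLast_mem _
    rcases hall t1 ht1mem with h | ⟨j, h⟩ | h
    · exact h_s1_t1 h.symm
    · exact ht1xf j h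
    · exact ht1yf i h
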